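/- arXiv:2505.21111 — 2 statements merged into one kernel-verified Lean document; each statement's English description precedes it below -/
import Mathlib

section
/- Let α, β be real numbers and set μ := α + β, ν := α − β. Then in ℝ[[q]]: 2·(∑_{n≥1} cos((4n−2)α) q^{2n²−2n})·(∑_{n≥1} cos((4n−2)β) q^{2n²−2n}) = (1 + 2∑_{n≥1} cos(4nμ) q^{4n²})·(∑_{n≥1} cos((4n−2)ν) q^{4n²−4n}) + (1 + 2∑_{n≥1} cos(4nν) q^{4n²})·(∑_{n≥1} cos((4n−2)μ) q^{4n²−4n}). -/
open Finset

/-- The formal power series `∑_{n ≥ 1} c(n) q^{e(n)}` in `ℝ[[q]]`, defined coefficientwise.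
(For each exponent function `e` used here, any `n ≥ 1` with `e n = k` satisfies `n ≤ k + 1`,
so the truncated range captures every term.) -/
noncomputable def mkSum (e : ℕ → ℕ) (c : ℕ → ℝ) : PowerSeries ℝ :=
  PowerSeries.mk fun k => ∑ n ∈ Finset.range (k + 2), if 1 ≤ n ∧ e n = k then c n else 0

lemma coeff_mkSum_of_le (e : ℕ → ℕ) (c : ℕ → ℝ) (he : ∀ n, 1 ≤ n → n ≤ e n + 1)
    (k : ℕ) {i : ℕ} (hik : i ≤ k) :
    PowerSeries.coeff (R := ℝ) i (mkSum e c) =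
      ∑ n ∈ Finset.range (k+2), if 1 ≤ n ∧ e n = i then c n else 0 := by
  rw [mkSum, PowerSeries.coeff_mk]
  apply Finset.sum_subset
  · intro x hx; simp only [Finset.mem_range] at hx ⊢; omega
  · intro x hx hx2
    rw [if_neg]
    rintro ⟨h1, h2⟩
    have := he x h1
    simp only [Finset.mem_range] at hx hx2
    omega

lemma coeff_mkSum_mul (e f : ℕ → ℕ) (c d : ℕ → ℝ) (he : ∀ n, 1 ≤ n → n ≤ e n + 1)
    (hf : ∀ n, 1 ≤ n → n ≤ f n + 1) (k : ℕ) :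
    PowerSeries.coeff (R := ℝ) k (mkSum e c * mkSum f d) =
      ∑ m ∈ Finset.range (k+2), ∑ n ∈ Finset.range (k+2),
        if 1 ≤ m ∧ 1 ≤ n ∧ e m + f n = k then c m * d n else 0 := by
  rw [PowerSeries.coeff_mul]
  have h1 : ∀ p ∈ Finset.HasAntidiagonal.antidiagonal k,
      PowerSeries.coeff (R := ℝ) p.1 (mkSum e c) * PowerSeries.coeff (R := ℝ) p.2 (mkSum f d) =
      ∑ m ∈ Finset.range (k+2), ∑ n ∈ Finset.range (k+2),
        (if 1 ≤ m ∧ e m = p.1 then c m else 0) * (if 1 ≤ n ∧ f n = p.2 then d n else 0) := by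
    intro p hp
    rw [Finset.HasAntidiagonal.mem_antidiagonal] at hp
    rw [coeff_mkSum_of_le e c he k (by omega), coeff_mkSum_of_le f d hf k (by omega),
      Finset.sum_mul_sum]
  rw [Finset.sum_congr rfl h1, Finset.sum_comm]
  refine Finset.sum_congr rfl fun m _ => ?_
  rw [Finset.sum_comm]
  refine Finset.sum_congr rfl fun n _ => ?_
  have h2 : ∀ p : ℕ × ℕ,
      (if 1 ≤ m ∧ e m = p.1 then c m else 0) * (if 1 ≤ n ∧ f n = p.2 then d n else 0) =
      if (e m, f n) = p then (if 1 ≤ m ∧ 1 ≤ n then c m * d n else 0) else 0 := by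
    intro p
    rcases p with ⟨i, j⟩
    simp only [Prod.mk.injEq]
    by_cases h3 : e m = i <;> by_cases h4 : f n = j <;>
      by_cases hm : 1 ≤ m <;> by_cases hn : 1 ≤ n <;>
      simp [h3, h4, hm, hn]
  rw [Finset.sum_congr rfl fun p _ => h2 p, Finset.sum_ite_eq (Finset.HasAntidiagonal.antidiagonal k)]
  simp only [Finset.HasAntidiagonal.mem_antidiagonal]
  split_ifs <;> first | rfl | (exfalso; omega)

noncomputable def Sk (k : ℕ) : Finset (ℤ × ℤ) :=
  ((Finset.Icc (-(k:ℤ)-1) ((k:ℤ)+1)) ×ˢ (Finset.Icc (-(k:ℤ)-1) ((k:ℤ)+1))).filter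
    (fun p => p.1^2 + p.2^2 = (k:ℤ)+1 ∧ Odd (p.1 + p.2))

lemma mem_Sk {k : ℕ} {p : ℤ × ℤ} :
    p ∈ Sk k ↔ p.1^2 + p.2^2 = (k:ℤ)+1 ∧ Odd (p.1 + p.2) := by
  simp only [Sk, Finset.mem_filter, Finset.mem_product, Finset.mem_Icc]
  constructor
  · tauto
  · rintro ⟨h1, h2⟩
    have hk : (0:ℤ) ≤ (k:ℤ) := Int.natCast_nonneg k
    refine ⟨⟨⟨?_, ?_⟩, ?_, ?_⟩, h1, h2⟩ <;>
      nlinarith [sq_nonneg p.1, sq_nonneg p.2, sq_nonneg (p.1-1), sq_nonneg (p.1+1),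
        sq_nonneg (p.2-1), sq_nonneg (p.2+1)]

lemma sum_Sk_map (k : ℕ) (g : ℤ×ℤ → ℤ×ℤ) (P Q : ℤ×ℤ → Prop) [DecidablePred P] [DecidablePred Q]
    (F G : ℤ×ℤ → ℝ)
    (hg2 : ∀ p, g (g p) = p)
    (hgS : ∀ p ∈ Sk k, g p ∈ Sk k)
    (hPQ : ∀ p ∈ Sk k, (P p ↔ Q (g p)))
    (hFG : ∀ p, F p = G (g p)) :
    ∑ p ∈ (Sk k).filter P, F p = ∑ p ∈ (Sk k).filter Q, G p := by
  refine Finset.sum_nbij' g g ?_ ?_ ?_ ?_ ?_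
  · rintro a ha
    rw [Finset.mem_filter] at ha ⊢
    exact ⟨hgS a ha.1, ((hPQ a ha.1).1 ha.2)⟩
  · rintro a ha
    rw [Finset.mem_filter] at ha ⊢
    have haS := hgS a ha.1
    refine ⟨haS, ?_⟩
    have := (hPQ (g a) haS).2
    rw [hg2] at this
    exact this ha.2
  · intro a _; exact hg2 a
  · intro a _; exact hg2 a
  · intro a _; exact hFG a

lemma sumA (α β : ℝ) (k : ℕ) :
    ∑ p ∈ Sk k, Real.cos (2*(p.1:ℝ)*(α+β) + 2*(p.2:ℝ)*(α-β)) =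
    4 * ∑ m ∈ Finset.range (k+2), ∑ n ∈ Finset.range (k+2),
      (if 1 ≤ m ∧ 1 ≤ n ∧ 2*m^2 - 2*m + (2*n^2 - 2*n) = k then
        Real.cos ((4*(m:ℝ) - 2)*α) * Real.cos ((4*(n:ℝ) - 2)*β) else 0) := by
  set F : ℤ×ℤ → ℝ := fun p => Real.cos (2*(p.1:ℝ)*(α+β) + 2*(p.2:ℝ)*(α-β)) with hF
  set P : ℤ×ℤ → Prop := fun p => p.2.natAbs < p.1.natAbs with hP
  -- Step 1&2: sum over ¬P equals sum over P of F ∘ swap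
  have step1 : (Sk k).filter (fun p => ¬ P p) = (Sk k).filter (fun p => p.1.natAbs < p.2.natAbs) := by
    apply Finset.filter_congr
    intro p hp
    obtain ⟨-, t, ht⟩ := mem_Sk.1 hp
    simp only [hP]
    omega
  have step2 : ∑ p ∈ (Sk k).filter (fun p => p.1.natAbs < p.2.natAbs), F p
      = ∑ p ∈ (Sk k).filter P, F p.swap := by
    refine sum_Sk_map k Prod.swap _ _ _ _ (fun p => Prod.swap_swap p) ?_ ?_ ?_
    · intro p hp
      rw [mem_Sk] at hp ⊢
      obtain ⟨h1, h2⟩ := hp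
      constructor
      · simp only [Prod.fst_swap, Prod.snd_swap]; linear_combination h1
      · simp only [Prod.fst_swap, Prod.snd_swap]; rw [Int.add_comm]; exact h2
    · intro p _; rfl
    · intro p; rw [Prod.swap_swap]
  have step3 : ∑ p ∈ Sk k, F p = ∑ p ∈ (Sk k).filter P, (F p + F p.swap) := by
    rw [Finset.sum_add_distrib, ← step2, ← step1,
      Finset.sum_filter_add_sum_filter_not]
  -- Step 4&5: split by sign of p.1
  set G : ℤ×ℤ → ℝ := fun p => F p + F p.swap with hG
  have step5 : ∑ p ∈ (Sk k).filter (fun p => P p ∧ ¬ 0 < p.1), G p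
      = ∑ p ∈ (Sk k).filter (fun p => P p ∧ 0 < p.1), G p := by
    have hcosneg : ∀ x y : ℝ, Real.cos (2*(-x)*(α+β) + 2*(-y)*(α-β))
        = Real.cos (2*x*(α+β) + 2*y*(α-β)) := by
      intro x y
      rw [show 2*(-x)*(α+β) + 2*(-y)*(α-β) = -(2*x*(α+β) + 2*y*(α-β)) from by ring,
        Real.cos_neg]
    refine sum_Sk_map k (fun p => (-p.1, -p.2)) _ _ _ _ (fun p => by simp) ?_ ?_ ?_
    · intro p hp
      rw [mem_Sk] at hp ⊢
      obtain ⟨h1, t, ht⟩ := hp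
      constructor
      · simp only; linear_combination h1
      · exact ⟨-t-1, by simp only; omega⟩
    · intro p hp
      simp only [hP]
      constructor
      · rintro ⟨h1, h2⟩; exact ⟨by omega, by omega⟩
      · rintro ⟨h1, h2⟩; exact ⟨by omega, by omega⟩
    · intro p
      simp only [hG, hF, Prod.fst_swap, Prod.snd_swap, Int.cast_neg]
      rw [hcosneg, hcosneg]
  have step4 : ∑ p ∈ (Sk k).filter P, G p
      = 2 * ∑ p ∈ (Sk k).filter (fun p => P p ∧ 0 < p.1), G p := by
    rw [two_mul]
    nth_rewrite 1 [← Finset.sum_filter_add_sum_filter_not ((Sk k).filter P) (fun p => 0 < p.1)]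
    rw [Finset.filter_filter, Finset.filter_filter, step5]
  -- Step 6: the bijection with the (m,n) index set
  have step6 : ∑ p ∈ (Sk k).filter (fun p => P p ∧ 0 < p.1), G p
      = ∑ q ∈ (Finset.range (k+2) ×ˢ Finset.range (k+2)).filter
          (fun q => 1 ≤ q.1 ∧ 1 ≤ q.2 ∧ 2*q.1^2 - 2*q.1 + (2*q.2^2 - 2*q.2) = k),
          2 * (Real.cos ((4*(q.1:ℝ) - 2)*α) * Real.cos ((4*(q.2:ℝ) - 2)*β)) := by
    refine (Finset.sum_nbij' (fun p => (((p.1+p.2+1)/2).toNat, ((p.1-p.2+1)/2).toNat))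
      (fun q => ((q.1:ℤ)+(q.2:ℤ)-1, (q.1:ℤ)-(q.2:ℤ))) ?_ ?_ ?_ ?_ ?_)
    · -- maps into the (m,n) set
      intro p hp
      rw [Finset.mem_filter] at hp
      obtain ⟨hpS, hPp, hpos⟩ := hp
      obtain ⟨h1, t, ht⟩ := mem_Sk.1 hpS
      simp only [Finset.mem_filter, Finset.mem_product, Finset.mem_range]
      have hx2 : p.1 ≤ p.1^2 := by nlinarith
      have hy2 : (0:ℤ) ≤ p.2^2 := sq_nonneg _
      have hxk : p.1 ≤ (k:ℤ)+1 := by nlinarith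
      have hm : (((p.1+p.2+1)/2).toNat : ℤ) = t+1 := by omega
      have hn : (((p.1-p.2+1)/2).toNat : ℤ) = p.1 - t := by
        simp only [hP] at hPp
        omega
      simp only [hP] at hPp
      refine ⟨⟨by omega, by omega⟩, by omega, by omega, ?_⟩
      have h2m : 2*((p.1+p.2+1)/2).toNat ≤ 2*((p.1+p.2+1)/2).toNat^2 := by nlinarith
      have h2n : 2*((p.1-p.2+1)/2).toNat ≤ 2*((p.1-p.2+1)/2).toNat^2 := by nlinarith
      zify [h2m, h2n]
      rw [hm, hn]
      have hy : p.2 = 2*t+1-p.1 := by omega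
      rw [hy] at h1
      linear_combination h1
    · -- reverse map
      intro q hq
      rw [Finset.mem_filter] at hq
      obtain ⟨-, hq1, hq2, hq3⟩ := hq
      rw [Finset.mem_filter, mem_Sk]
      have h2m : 2*q.1 ≤ 2*q.1^2 := by nlinarith
      have h2n : 2*q.2 ≤ 2*q.2^2 := by nlinarith
      zify [h2m, h2n] at hq3
      refine ⟨⟨?_, ?_⟩, ?_, ?_⟩
      · show ((q.1:ℤ)+(q.2:ℤ)-1)^2 + ((q.1:ℤ)-(q.2:ℤ))^2 = (k:ℤ)+1
        linear_combination hq3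
      · refine ⟨(q.1:ℤ)-1, ?_⟩
        show (q.1:ℤ)+(q.2:ℤ)-1 + ((q.1:ℤ)-(q.2:ℤ)) = 2*((q.1:ℤ)-1)+1
        ring
      · show ((q.1:ℤ)-(q.2:ℤ)).natAbs < ((q.1:ℤ)+(q.2:ℤ)-1).natAbs
        omega
      · show (0:ℤ) < (q.1:ℤ)+(q.2:ℤ)-1
        omega
    · intro p hp
      rw [Finset.mem_filter] at hp
      obtain ⟨hpS, hPp, hpos⟩ := hp
      obtain ⟨-, t, ht⟩ := mem_Sk.1 hpS
      simp only [hP] at hPp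
      have : ((((p.1+p.2+1)/2).toNat : ℤ), (((p.1-p.2+1)/2).toNat : ℤ)) = (t+1, p.1-t) := by
        rw [Prod.mk.injEq]; constructor <;> omega
      rw [Prod.ext_iff]
      simp only
      constructor <;> omega
    · intro q hq
      rw [Finset.mem_filter] at hq
      obtain ⟨-, hq1, hq2, -⟩ := hq
      rw [Prod.ext_iff]
      simp only
      constructor <;> omega
    · intro p hp
      rw [Finset.mem_filter] at hp
      obtain ⟨hpS, hPp, hpos⟩ := hp
      obtain ⟨-, t, ht⟩ := mem_Sk.1 hpS
      simp only [hP] at hPp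
      have hm : (((p.1+p.2+1)/2).toNat : ℝ) = ((t:ℝ)+1) := by
        have : (((p.1+p.2+1)/2).toNat : ℤ) = t+1 := by omega
        exact_mod_cast congrArg (Int.cast : ℤ → ℝ) this
      have hn : (((p.1-p.2+1)/2).toNat : ℝ) = ((p.1:ℝ) - t) := by
        have : (((p.1-p.2+1)/2).toNat : ℤ) = p.1 - t := by omega
        have := congrArg (Int.cast : ℤ → ℝ) this
        push_cast at this
        exact_mod_cast this
      simp only [hG, hF, Prod.fst_swap, Prod.snd_swap]
      rw [Real.cos_add_cos]
      rw [hm, hn]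
      have hy : (p.2 : ℝ) = 2*(t:ℝ)+1-(p.1:ℝ) := by
        have : p.2 = 2*t+1-p.1 := by omega
        exact_mod_cast congrArg (Int.cast : ℤ → ℝ) this
      rw [hy]
      ring_nf
  -- assemble
  rw [step3, step4, step6, Finset.sum_filter, Finset.sum_product]
  rw [Finset.mul_sum, Finset.mul_sum]
  refine Finset.sum_congr rfl fun m _ => ?_
  rw [Finset.mul_sum, Finset.mul_sum]
  refine Finset.sum_congr rfl fun n _ => ?_
  split_ifs <;> ring

lemma sumB (μ ν : ℝ) (k : ℕ) :
    ∑ p ∈ (Sk k).filter (fun p => Even p.1), Real.cos (2*(p.1:ℝ)*μ + 2*(p.2:ℝ)*ν)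
    = 2 * (∑ b ∈ Finset.range (k+2), if 1 ≤ b ∧ 4*b^2 - 4*b = k then Real.cos ((4*(b:ℝ)-2)*ν) else 0)
    + 4 * ∑ a ∈ Finset.range (k+2), ∑ b ∈ Finset.range (k+2),
        if 1 ≤ a ∧ 1 ≤ b ∧ 4*a^2 + (4*b^2 - 4*b) = k then
          Real.cos (4*(a:ℝ)*μ) * Real.cos ((4*(b:ℝ)-2)*ν) else 0 := by
  set F : ℤ×ℤ → ℝ := fun p => Real.cos (2*(p.1:ℝ)*μ + 2*(p.2:ℝ)*ν) with hF
  have hcosneg : ∀ x y : ℝ, Real.cos (2*(-x)*μ + 2*(-y)*ν) = Real.cos (2*x*μ + 2*y*ν) := by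
    intro x y
    rw [show 2*(-x)*μ + 2*(-y)*ν = -(2*x*μ + 2*y*ν) from by ring, Real.cos_neg]
  -- split by p.1 = 0
  have split0 : ∑ p ∈ (Sk k).filter (fun p => Even p.1), F p
      = ∑ p ∈ (Sk k).filter (fun p => Even p.1 ∧ p.1 = 0), F p
      + ∑ p ∈ (Sk k).filter (fun p => Even p.1 ∧ ¬ p.1 = 0), F p := by
    rw [← Finset.sum_filter_add_sum_filter_not ((Sk k).filter (fun p => Even p.1)) (fun p => p.1 = 0),
      Finset.filter_filter, Finset.filter_filter]
  -- zero part
  have neg0 : ∑ p ∈ (Sk k).filter (fun p => (Even p.1 ∧ p.1 = 0) ∧ ¬ 0 < p.2), F p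
      = ∑ p ∈ (Sk k).filter (fun p => (Even p.1 ∧ p.1 = 0) ∧ 0 < p.2), F p := by
    refine sum_Sk_map k (fun p => (-p.1, -p.2)) _ _ _ _ (fun p => by simp) ?_ ?_ ?_
    · intro p hp
      rw [mem_Sk] at hp ⊢
      obtain ⟨h1, t, ht⟩ := hp
      constructor
      · simp only; linear_combination h1
      · exact ⟨-t-1, by simp only; omega⟩
    · intro p hp
      obtain ⟨-, t, ht⟩ := mem_Sk.1 hp
      simp only [Int.even_iff]
      constructor
      · rintro ⟨⟨h1, h2⟩, h3⟩; exact ⟨⟨by omega, by omega⟩, by omega⟩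
      · rintro ⟨⟨h1, h2⟩, h3⟩; exact ⟨⟨by omega, by omega⟩, by omega⟩
    · intro p
      simp only [hF, Int.cast_neg]
      rw [hcosneg]
  have zero_part : ∑ p ∈ (Sk k).filter (fun p => Even p.1 ∧ p.1 = 0), F p
      = 2 * ∑ b ∈ (Finset.range (k+2)).filter (fun b => 1 ≤ b ∧ 4*b^2 - 4*b = k),
          Real.cos ((4*(b:ℝ)-2)*ν) := by
    rw [← Finset.sum_filter_add_sum_filter_not ((Sk k).filter (fun p => Even p.1 ∧ p.1 = 0)) (fun p => 0 < p.2),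
      Finset.filter_filter, Finset.filter_filter, neg0, two_mul]
    have main : ∑ p ∈ (Sk k).filter (fun p => (Even p.1 ∧ p.1 = 0) ∧ 0 < p.2), F p
        = ∑ b ∈ (Finset.range (k+2)).filter (fun b => 1 ≤ b ∧ 4*b^2 - 4*b = k),
          Real.cos ((4*(b:ℝ)-2)*ν) := by
      refine Finset.sum_nbij' (fun p => ((p.2+1)/2).toNat) (fun b => ((0:ℤ), 2*(b:ℤ)-1)) ?_ ?_ ?_ ?_ ?_
      · intro p hp
        rw [Finset.mem_filter] at hp
        obtain ⟨hpS, ⟨-, h0⟩, hpos⟩ := hp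
        obtain ⟨h1, t, ht⟩ := mem_Sk.1 hpS
        rw [h0] at h1 ht
        simp only [Finset.mem_filter, Finset.mem_range]
        have hyy : p.2 ≤ p.2^2 := by nlinarith
        have hb : ((((p.2+1)/2).toNat) : ℤ) = t+1 := by omega
        refine ⟨by omega, by omega, ?_⟩
        have h4b : 4*((p.2+1)/2).toNat ≤ 4*((p.2+1)/2).toNat^2 := by nlinarith
        zify [h4b]
        rw [hb]
        have hy : p.2 = 2*t+1 := by omega
        rw [hy] at h1
        linear_combination h1
      · intro b hb
        rw [Finset.mem_filter, Finset.mem_range] at hb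
        obtain ⟨-, hb1, hb2⟩ := hb
        rw [Finset.mem_filter, mem_Sk]
        have h4b : 4*b ≤ 4*b^2 := by nlinarith
        zify [h4b] at hb2
        refine ⟨⟨?_, ⟨(b:ℤ)-1, ?_⟩⟩, ⟨?_, ?_⟩, ?_⟩
        · show (0:ℤ)^2 + (2*(b:ℤ)-1)^2 = (k:ℤ)+1
          linear_combination hb2
        · show (0:ℤ) + (2*(b:ℤ)-1) = 2*((b:ℤ)-1)+1
          ring
        · show Even (0:ℤ)
          exact ⟨0, rfl⟩
        · rfl
        · show (0:ℤ) < 2*(b:ℤ)-1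
          omega
      · intro p hp
        rw [Finset.mem_filter] at hp
        obtain ⟨hpS, ⟨-, h0⟩, hpos⟩ := hp
        obtain ⟨-, t, ht⟩ := mem_Sk.1 hpS
        rw [h0] at ht
        rw [Prod.ext_iff]
        simp only
        constructor <;> omega
      · intro b hb
        rw [Finset.mem_filter] at hb
        simp only
        omega
      · intro p hp
        rw [Finset.mem_filter] at hp
        obtain ⟨hpS, ⟨-, h0⟩, hpos⟩ := hp
        obtain ⟨-, t, ht⟩ := mem_Sk.1 hpS
        rw [h0] at ht
        have hb : ((((p.2+1)/2).toNat) : ℝ) = ((t:ℝ)+1) := by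
          have : ((((p.2+1)/2).toNat) : ℤ) = t+1 := by omega
          exact_mod_cast congrArg (Int.cast : ℤ → ℝ) this
        simp only [hF]
        rw [hb]
        have hy : (p.2 : ℝ) = 2*(t:ℝ)+1 := by
          have : p.2 = 2*t+1 := by omega
          exact_mod_cast congrArg (Int.cast : ℤ → ℝ) this
        rw [h0, hy]
        push_cast
        ring_nf
    rw [main]
  -- nonzero part
  have negne : ∑ p ∈ (Sk k).filter (fun p => (Even p.1 ∧ ¬ p.1 = 0) ∧ ¬ 0 < p.1), F p
      = ∑ p ∈ (Sk k).filter (fun p => (Even p.1 ∧ ¬ p.1 = 0) ∧ 0 < p.1), F p := by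
    refine sum_Sk_map k (fun p => (-p.1, -p.2)) _ _ _ _ (fun p => by simp) ?_ ?_ ?_
    · intro p hp
      rw [mem_Sk] at hp ⊢
      obtain ⟨h1, t, ht⟩ := hp
      constructor
      · simp only; linear_combination h1
      · exact ⟨-t-1, by simp only; omega⟩
    · intro p hp
      simp only [Int.even_iff]
      constructor
      · rintro ⟨⟨h1, h2⟩, h3⟩; exact ⟨⟨by omega, by omega⟩, by omega⟩
      · rintro ⟨⟨h1, h2⟩, h3⟩; exact ⟨⟨by omega, by omega⟩, by omega⟩
    · intro p
      simp only [hF, Int.cast_neg]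
      rw [hcosneg]
  have negy : ∑ p ∈ (Sk k).filter (fun p => ((Even p.1 ∧ ¬ p.1 = 0) ∧ 0 < p.1) ∧ ¬ 0 < p.2), F p
      = ∑ p ∈ (Sk k).filter (fun p => ((Even p.1 ∧ ¬ p.1 = 0) ∧ 0 < p.1) ∧ 0 < p.2),
          Real.cos (2*(p.1:ℝ)*μ - 2*(p.2:ℝ)*ν) := by
    refine sum_Sk_map k (fun p => (p.1, -p.2)) _ _ _ _ (fun p => by simp) ?_ ?_ ?_
    · intro p hp
      rw [mem_Sk] at hp ⊢
      obtain ⟨h1, t, ht⟩ := hp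
      constructor
      · simp only; linear_combination h1
      · exact ⟨t - p.2, by simp only; omega⟩
    · intro p hp
      obtain ⟨-, t, ht⟩ := mem_Sk.1 hp
      simp only [Int.even_iff]
      constructor
      · rintro ⟨⟨⟨h1, h2⟩, h3⟩, h4⟩; exact ⟨⟨⟨by omega, by omega⟩, by omega⟩, by omega⟩
      · rintro ⟨⟨⟨h1, h2⟩, h3⟩, h4⟩; exact ⟨⟨⟨by omega, by omega⟩, by omega⟩, by omega⟩
    · intro p
      simp only [hF, Int.cast_neg]
      rw [show 2*(p.1:ℝ)*μ - 2*(-(p.2:ℝ))*ν = 2*(p.1:ℝ)*μ + 2*(p.2:ℝ)*ν from by ring]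
  have main2 : ∑ p ∈ (Sk k).filter (fun p => ((Even p.1 ∧ ¬ p.1 = 0) ∧ 0 < p.1) ∧ 0 < p.2),
        (F p + Real.cos (2*(p.1:ℝ)*μ - 2*(p.2:ℝ)*ν))
      = ∑ q ∈ (Finset.range (k+2) ×ˢ Finset.range (k+2)).filter
          (fun q => 1 ≤ q.1 ∧ 1 ≤ q.2 ∧ 4*q.1^2 + (4*q.2^2 - 4*q.2) = k),
          2 * (Real.cos (4*(q.1:ℝ)*μ) * Real.cos ((4*(q.2:ℝ)-2)*ν)) := by
    refine Finset.sum_nbij' (fun p => ((p.1/2).toNat, ((p.2+1)/2).toNat))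
      (fun q => (2*(q.1:ℤ), 2*(q.2:ℤ)-1)) ?_ ?_ ?_ ?_ ?_
    · intro p hp
      rw [Finset.mem_filter] at hp
      obtain ⟨hpS, ⟨⟨hev, hne⟩, hx⟩, hy⟩ := hp
      obtain ⟨h1, t, ht⟩ := mem_Sk.1 hpS
      rw [Int.even_iff] at hev
      simp only [Finset.mem_filter, Finset.mem_product, Finset.mem_range]
      have hxx : p.1 ≤ p.1^2 := by nlinarith
      have hyy : p.2 ≤ p.2^2 := by nlinarith
      have hy2 : (0:ℤ) ≤ p.2^2 := sq_nonneg _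
      have hx2 : (0:ℤ) ≤ p.1^2 := sq_nonneg _
      have hxk : p.1 ≤ (k:ℤ)+1 := by nlinarith
      have hyk : p.2 ≤ (k:ℤ)+1 := by nlinarith
      have ha' : p.1 = 2*(((p.1/2).toNat):ℤ) := by omega
      have hb' : p.2 = 2*((((p.2+1)/2).toNat):ℤ)-1 := by omega
      refine ⟨⟨by omega, by omega⟩, by omega, by omega, ?_⟩
      have h4b : 4*((p.2+1)/2).toNat ≤ 4*((p.2+1)/2).toNat^2 := by nlinarith
      zify [h4b]
      rw [ha', hb'] at h1
      linear_combination h1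
    · intro q hq
      rw [Finset.mem_filter, Finset.mem_product, Finset.mem_range, Finset.mem_range] at hq
      obtain ⟨-, hq1, hq2, hq3⟩ := hq
      rw [Finset.mem_filter, mem_Sk]
      have h4b : 4*q.2 ≤ 4*q.2^2 := by nlinarith
      zify [h4b] at hq3
      refine ⟨⟨?_, ⟨(q.1:ℤ)+(q.2:ℤ)-1, ?_⟩⟩, ⟨⟨⟨⟨(q.1:ℤ), by simp only; ring⟩, ?_⟩, ?_⟩, ?_⟩⟩
      · show (2*(q.1:ℤ))^2 + (2*(q.2:ℤ)-1)^2 = (k:ℤ)+1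
        linear_combination hq3
      · show 2*(q.1:ℤ) + (2*(q.2:ℤ)-1) = 2*((q.1:ℤ)+(q.2:ℤ)-1)+1
        ring
      · show ¬ (2*(q.1:ℤ)) = 0
        omega
      · show (0:ℤ) < 2*(q.1:ℤ)
        omega
      · show (0:ℤ) < 2*(q.2:ℤ)-1
        omega
    · intro p hp
      rw [Finset.mem_filter] at hp
      obtain ⟨hpS, ⟨⟨hev, hne⟩, hx⟩, hy⟩ := hp
      obtain ⟨-, t, ht⟩ := mem_Sk.1 hpS
      rw [Int.even_iff] at hev
      rw [Prod.ext_iff]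
      simp only
      constructor <;> omega
    · intro q hq
      rw [Finset.mem_filter, Finset.mem_product, Finset.mem_range, Finset.mem_range] at hq
      obtain ⟨-, hq1, hq2, -⟩ := hq
      rw [Prod.ext_iff]
      simp only
      constructor <;> omega
    · intro p hp
      rw [Finset.mem_filter] at hp
      obtain ⟨hpS, ⟨⟨hev, hne⟩, hx⟩, hy⟩ := hp
      obtain ⟨-, t, ht⟩ := mem_Sk.1 hpS
      rw [Int.even_iff] at hev
      simp only [hF]
      rw [Real.cos_add_cos]
      have ha : (((p.1/2).toNat) : ℝ) * 2 = (p.1:ℝ) := by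
        have : ((p.1/2).toNat : ℤ) * 2 = p.1 := by omega
        exact_mod_cast congrArg (Int.cast : ℤ → ℝ) this
      have hb : ((((p.2+1)/2).toNat) : ℝ) * 2 - 1 = (p.2:ℝ) := by
        have : ((((p.2+1)/2).toNat) : ℤ) * 2 - 1 = p.2 := by omega
        exact_mod_cast congrArg (Int.cast : ℤ → ℝ) this
      rw [← ha, ← hb]
      ring_nf
  -- assemble
  rw [split0, zero_part]
  rw [← Finset.sum_filter_add_sum_filter_not ((Sk k).filter (fun p => Even p.1 ∧ ¬ p.1 = 0)) (fun p => 0 < p.1),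
    Finset.filter_filter, Finset.filter_filter, negne, ← two_mul]
  rw [← Finset.sum_filter_add_sum_filter_not
      ((Sk k).filter (fun p => (Even p.1 ∧ ¬ p.1 = 0) ∧ 0 < p.1)) (fun p => 0 < p.2),
    Finset.filter_filter, Finset.filter_filter, negy, ← Finset.sum_add_distrib, main2]
  rw [Finset.sum_filter, Finset.sum_filter, Finset.sum_product]
  dsimp only
  congr 1
  rw [Finset.mul_sum, Finset.mul_sum]
  refine Finset.sum_congr rfl fun a _ => ?_
  rw [Finset.mul_sum, Finset.mul_sum]
  refine Finset.sum_congr rfl fun b _ => ?_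
  split_ifs <;> ring


lemma sumB' (μ ν : ℝ) (k : ℕ) :
    ∑ p ∈ Sk k, Real.cos (2*(p.1:ℝ)*μ + 2*(p.2:ℝ)*ν)
    = ∑ p ∈ (Sk k).filter (fun p => Even p.1), Real.cos (2*(p.1:ℝ)*μ + 2*(p.2:ℝ)*ν)
    + ∑ p ∈ (Sk k).filter (fun p => Even p.1), Real.cos (2*(p.1:ℝ)*ν + 2*(p.2:ℝ)*μ) := by
  rw [← Finset.sum_filter_add_sum_filter_not (Sk k) (fun p => Even p.1)]
  congr 1
  refine sum_Sk_map k Prod.swap _ _ _ _ (fun p => Prod.swap_swap p) ?_ ?_ ?_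
  · intro p hp
    rw [mem_Sk] at hp ⊢
    obtain ⟨h1, h2⟩ := hp
    constructor
    · simp only [Prod.fst_swap, Prod.snd_swap]; linear_combination h1
    · simp only [Prod.fst_swap, Prod.snd_swap]; rw [Int.add_comm]; exact h2
  · intro p hp
    obtain ⟨-, t, ht⟩ := mem_Sk.1 hp
    simp only [Int.even_iff, Prod.fst_swap]
    omega
  · intro p
    simp only [Prod.fst_swap, Prod.snd_swap]
    congr 1
    ring

/-- For real `α, β` with `μ := α + β` and `ν := α - β`, in `ℝ[[q]]`:
`2 (∑ cos((4n-2)α) q^{2n²-2n})(∑ cos((4n-2)β) q^{2n²-2n})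
  = (1 + 2∑ cos(4nμ) q^{4n²})(∑ cos((4n-2)ν) q^{4n²-4n})
    + (1 + 2∑ cos(4nν) q^{4n²})(∑ cos((4n-2)μ) q^{4n²-4n})`. -/
theorem cos_dissection_odd (α β : ℝ) :
    2 * ((mkSum (fun n => 2 * n ^ 2 - 2 * n) fun n => Real.cos ((4 * n - 2) * α)) *
      (mkSum (fun n => 2 * n ^ 2 - 2 * n) fun n => Real.cos ((4 * n - 2) * β))) =
    (1 + 2 * mkSum (fun n => 4 * n ^ 2) fun n => Real.cos (4 * n * (α + β))) *
      (mkSum (fun n => 4 * n ^ 2 - 4 * n) fun n => Real.cos ((4 * n - 2) * (α - β))) +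
    (1 + 2 * mkSum (fun n => 4 * n ^ 2) fun n => Real.cos (4 * n * (α - β))) *
      (mkSum (fun n => 4 * n ^ 2 - 4 * n) fun n => Real.cos ((4 * n - 2) * (α + β))) := by
  apply PowerSeries.ext
  intro k
  have he1 : ∀ n : ℕ, 1 ≤ n → n ≤ (2*n^2 - 2*n) + 1 := by
    intro n hn
    have h2 : 2*n ≤ 2*n^2 := by nlinarith
    zify [h2]
    zify at hn
    nlinarith [mul_nonneg (by linarith : (0:ℤ) ≤ (n:ℤ)-1) (by linarith : (0:ℤ) ≤ 2*(n:ℤ)-1)]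
  have he2 : ∀ n : ℕ, 1 ≤ n → n ≤ 4*n^2 + 1 := by
    intro n hn; nlinarith
  have he3 : ∀ n : ℕ, 1 ≤ n → n ≤ (4*n^2 - 4*n) + 1 := by
    intro n hn
    have h2 : 4*n ≤ 4*n^2 := by nlinarith
    zify [h2]
    zify at hn
    nlinarith [mul_nonneg (by linarith : (0:ℤ) ≤ (n:ℤ)-1) (by linarith : (0:ℤ) ≤ 4*(n:ℤ)-1)]
  have hL : PowerSeries.coeff (R := ℝ) k
      ((mkSum (fun n => 2 * n ^ 2 - 2 * n) fun n => Real.cos ((4 * n - 2) * α)) *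
       (mkSum (fun n => 2 * n ^ 2 - 2 * n) fun n => Real.cos ((4 * n - 2) * β)))
      = ∑ m ∈ Finset.range (k+2), ∑ n ∈ Finset.range (k+2),
          (if 1 ≤ m ∧ 1 ≤ n ∧ 2*m^2 - 2*m + (2*n^2 - 2*n) = k then
            Real.cos ((4*(m:ℝ) - 2)*α) * Real.cos ((4*(n:ℝ) - 2)*β) else 0) :=
    coeff_mkSum_mul _ _ _ _ he1 he1 k
  have hU1 : PowerSeries.coeff (R := ℝ) k
      ((mkSum (fun n => 4 * n ^ 2) fun n => Real.cos (4 * n * (α + β))) *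
       (mkSum (fun n => 4 * n ^ 2 - 4 * n) fun n => Real.cos ((4 * n - 2) * (α - β))))
      = ∑ a ∈ Finset.range (k+2), ∑ b ∈ Finset.range (k+2),
          (if 1 ≤ a ∧ 1 ≤ b ∧ 4*a^2 + (4*b^2 - 4*b) = k then
            Real.cos (4*(a:ℝ)*(α+β)) * Real.cos ((4*(b:ℝ) - 2)*(α-β)) else 0) :=
    coeff_mkSum_mul _ _ _ _ he2 he3 k
  have hU2 : PowerSeries.coeff (R := ℝ) k
      ((mkSum (fun n => 4 * n ^ 2) fun n => Real.cos (4 * n * (α - β))) *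
       (mkSum (fun n => 4 * n ^ 2 - 4 * n) fun n => Real.cos ((4 * n - 2) * (α + β))))
      = ∑ a ∈ Finset.range (k+2), ∑ b ∈ Finset.range (k+2),
          (if 1 ≤ a ∧ 1 ≤ b ∧ 4*a^2 + (4*b^2 - 4*b) = k then
            Real.cos (4*(a:ℝ)*(α-β)) * Real.cos ((4*(b:ℝ) - 2)*(α+β)) else 0) :=
    coeff_mkSum_mul _ _ _ _ he2 he3 k
  have hT1 : PowerSeries.coeff (R := ℝ) k
      (mkSum (fun n => 4 * n ^ 2 - 4 * n) fun n => Real.cos ((4 * n - 2) * (α - β)))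
      = ∑ b ∈ Finset.range (k+2),
          (if 1 ≤ b ∧ 4*b^2 - 4*b = k then Real.cos ((4*(b:ℝ) - 2)*(α-β)) else 0) := by
    rw [mkSum, PowerSeries.coeff_mk]
  have hT2 : PowerSeries.coeff (R := ℝ) k
      (mkSum (fun n => 4 * n ^ 2 - 4 * n) fun n => Real.cos ((4 * n - 2) * (α + β)))
      = ∑ b ∈ Finset.range (k+2),
          (if 1 ≤ b ∧ 4*b^2 - 4*b = k then Real.cos ((4*(b:ℝ) - 2)*(α+β)) else 0) := by
    rw [mkSum, PowerSeries.coeff_mk]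
  rw [two_mul, add_mul, add_mul, one_mul, one_mul, mul_assoc, mul_assoc, two_mul, two_mul]
  simp only [map_add]
  rw [hL, hU1, hU2, hT1, hT2]
  have hA := sumA α β k
  have hB' := sumB' (α+β) (α-β) k
  have hB1 := sumB (α+β) (α-β) k
  have hB2 := sumB (α-β) (α+β) k
  linarith [hA, hB', hB1, hB2]
end

section
/- For all n ≥ 0 and k ≥ 0: ∑_λ m(λ), summed over partitions λ of 2n into odd parts with exactly k distinct part sizes, each of which occurs an even number of times, equals ∑_{(μ,ν)} m(μ)·m(ν), summed over ordered pairs (μ,ν) of partitions into odd parts with |μ|+|ν| = n, ℓ_d(μ)+ℓ_d(ν) = k, and no part size occurring in both μ and ν. That is, the number of PDO partitions of 2n with k distinct part sizes, none occurring an odd number of times, equals the number of PDO partition pairs of combined weight n with k designated parts and no common part size. -/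
set_option maxHeartbeats 1000000

/-- `m(λ)`: the product of the multiplicities of the distinct part sizes of a partition,
i.e. the number of PDO designations of `λ`. -/
def pdoWeight {n : ℕ} (l : n.Partition) : ℕ :=
  ∏ a ∈ l.parts.toFinset, l.parts.count a

/-- `ℓ_d(λ)`: the number of distinct part sizes of a partition. -/
def numDistinct {n : ℕ} (l : n.Partition) : ℕ :=
  l.parts.toFinset.card

/-! ### Auxiliary constructions -/

/-- Halve every multiplicity of a multiset. -/
def halfM (s : Multiset ℕ) : Multiset ℕ :=
  ∑ a ∈ s.toFinset, Multiset.replicate (s.count a / 2) a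

lemma count_halfM (s : Multiset ℕ) (a : ℕ) : (halfM s).count a = s.count a / 2 := by
  classical
  unfold halfM
  rw [Multiset.count_sum']
  by_cases h : a ∈ s.toFinset
  · rw [Finset.sum_eq_single a (fun b _ hb => by
      rw [Multiset.count_replicate, if_neg hb]) (fun h' => absurd h h')]
    rw [Multiset.count_replicate, if_pos rfl]
  · rw [Finset.sum_eq_zero fun b hb => by
      rw [Multiset.count_replicate, if_neg (fun hh : b = a => h (hh ▸ hb))]]
    have : s.count a = 0 := by
      rw [Multiset.count_eq_zero]
      exact fun hm => h (Multiset.mem_toFinset.2 hm)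
    omega

lemma halfM_double (t : Multiset ℕ) : halfM (t + t) = t :=
  Multiset.ext.2 fun a => by rw [count_halfM, Multiset.count_add]; omega

/-- Double a partition of `n` into a partition of `2 * n`. -/
def doubleP {n : ℕ} (ρ : n.Partition) : (2 * n).Partition where
  parts := ρ.parts + ρ.parts
  parts_pos := fun h => ρ.parts_pos ((Multiset.mem_add.1 h).elim id id)
  parts_sum := by rw [Multiset.sum_add, ρ.parts_sum, two_mul]

/-- Halve a partition of `2 * n` (junk value if some multiplicity is odd). -/
def halveP {n : ℕ} (l : (2 * n).Partition) : n.Partition :=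
  if h : (halfM l.parts).sum = n then
    { parts := halfM l.parts
      parts_pos := fun {i} hi => by
        have h1 := Multiset.count_pos.2 hi
        rw [count_halfM] at h1
        exact l.parts_pos (Multiset.count_pos.1 (by omega))
      parts_sum := h }
  else Nat.Partition.ofSums n (Multiset.replicate n 1) (by simp)

lemma halfM_add_self {n : ℕ} (l : (2 * n).Partition)
    (he : ∀ a ∈ l.parts.toFinset, Even (l.parts.count a)) :
    halfM l.parts + halfM l.parts = l.parts := by
  refine Multiset.ext.2 fun a => ?_
  rw [Multiset.count_add, count_halfM]
  by_cases h : a ∈ l.parts.toFinset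
  · obtain ⟨c, hc⟩ := he a h; omega
  · have : l.parts.count a = 0 := by
      rw [Multiset.count_eq_zero]
      exact fun hm => h (Multiset.mem_toFinset.2 hm)
    omega

lemma halveP_parts {n : ℕ} (l : (2 * n).Partition)
    (he : ∀ a ∈ l.parts.toFinset, Even (l.parts.count a)) :
    (halveP l).parts = halfM l.parts := by
  have hs : (halfM l.parts).sum = n := by
    have h2 := congrArg Multiset.sum (halfM_add_self l he)
    rw [Multiset.sum_add, l.parts_sum] at h2
    omega
  rw [halveP, dif_pos hs]

/-! ### Sigma types for the second bijection -/

abbrev PairT (n : ℕ) := Σ i : ℕ, Nat.Partition i × Nat.Partition (n - i)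
abbrev RhoT (n : ℕ) := Σ _ : Nat.Partition n, Finset ℕ

lemma pair_ext {n : ℕ} {i j : ℕ} (h : i = j) {mu : Nat.Partition i} {nu : Nat.Partition (n - i)}
    {mu' : Nat.Partition j} {nu' : Nat.Partition (n - j)}
    (hmu : mu.parts = mu'.parts) (hnu : nu.parts = nu'.parts) :
    (⟨i, (mu, nu)⟩ : PairT n) = ⟨j, (mu', nu')⟩ := by
  subst h
  obtain rfl : mu = mu' := Nat.Partition.ext hmu
  obtain rfl : nu = nu' := Nat.Partition.ext hnu
  rfl

lemma rho_ext {n : ℕ} {ρ ρ' : Nat.Partition n} {S S' : Finset ℕ}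
    (h1 : ρ.parts = ρ'.parts) (h2 : S = S') : (⟨ρ, S⟩ : RhoT n) = ⟨ρ', S'⟩ := by
  obtain rfl : ρ = ρ' := Nat.Partition.ext h1
  subst h2
  rfl

/-- Split a partition with a chosen set of part sizes into a pair. -/
def splitP {n : ℕ} (x : RhoT n) : PairT n :=
  ⟨(x.1.parts.filter (· ∈ x.2)).sum,
   ({ parts := x.1.parts.filter (· ∈ x.2)
      parts_pos := fun h => x.1.parts_pos (Multiset.mem_of_mem_filter h)
      parts_sum := rfl },
    { parts := x.1.parts.filter (· ∉ x.2)
      parts_pos := fun h => x.1.parts_pos (Multiset.mem_of_mem_filter h)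
      parts_sum := by
        have h1 := Multiset.sum_filter_add_sum_filter_not (s := x.1.parts) (· ∈ x.2)
        rw [x.1.parts_sum] at h1
        omega })⟩

/-- Join a pair of partitions into one partition with the chosen set of part sizes. -/
def joinP {n : ℕ} (y : PairT n) : RhoT n :=
  if h : y.1 ≤ n then
    ⟨{ parts := y.2.1.parts + y.2.2.parts
       parts_pos := fun hm => (Multiset.mem_add.1 hm).elim y.2.1.parts_pos y.2.2.parts_pos
       parts_sum := by rw [Multiset.sum_add, y.2.1.parts_sum, y.2.2.parts_sum]; omega },
     y.2.1.parts.toFinset⟩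
  else ⟨Nat.Partition.ofSums n (Multiset.replicate n 1) (by simp), ∅⟩

/-- For all `n, k ≥ 0`: the number of PDO partitions of `2n` with `k` distinct part sizes, each
occurring an even number of times, equals the number of PDO partition pairs of combined weight
`n` with `k` designated parts and no common part size. -/
theorem pdo_refined_even_multiplicities (n k : ℕ) :
    (∑ l ∈ (Nat.Partition.odds (2 * n)).filter
        (fun l => numDistinct l = k ∧ ∀ a ∈ l.parts.toFinset, Even (l.parts.count a)),
      pdoWeight l) =
      ∑ i ∈ Finset.range (n + 1),
        ∑ mu ∈ Nat.Partition.odds i,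
          ∑ nu ∈ Nat.Partition.odds (n - i),
            if numDistinct mu + numDistinct nu = k ∧
                mu.parts.toFinset ∩ nu.parts.toFinset = ∅ then
              pdoWeight mu * pdoWeight nu
            else 0 := by
  classical
  -- Step 1 : LHS equals the sum of `2^k * pdoWeight ρ` over odd partitions of `n`
  -- with `k` distinct part sizes, via doubling / halving multiplicities.
  have step1 : (∑ l ∈ (Nat.Partition.odds (2 * n)).filter
        (fun l => numDistinct l = k ∧ ∀ a ∈ l.parts.toFinset, Even (l.parts.count a)),
      pdoWeight l) =
      ∑ ρ ∈ (Nat.Partition.odds n).filter (fun ρ => numDistinct ρ = k),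
        2 ^ k * pdoWeight ρ := by
    refine (Finset.sum_nbij' doubleP halveP ?_ ?_ ?_ ?_ ?_).symm
    · -- doubleP maps into the LHS set
      intro ρ hρ
      rw [Finset.mem_filter] at hρ ⊢
      obtain ⟨hodds, hk⟩ := hρ
      rw [Nat.Partition.odds, Nat.Partition.restricted, Finset.mem_filter] at hodds ⊢
      have htf : (doubleP ρ).parts.toFinset = ρ.parts.toFinset := by
        show (ρ.parts + ρ.parts).toFinset = _
        rw [Multiset.toFinset_add, Finset.union_self]
      refine ⟨⟨Finset.mem_univ _, fun i hi => hodds.2 i ((Multiset.mem_add.1 hi).elim id id)⟩,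
        ?_, ?_⟩
      · show (doubleP ρ).parts.toFinset.card = k
        rw [htf]; exact hk
      · intro a _
        show Even ((ρ.parts + ρ.parts).count a)
        rw [Multiset.count_add]
        exact ⟨_, rfl⟩
    · -- halveP maps back
      intro l hl
      rw [Finset.mem_filter] at hl ⊢
      obtain ⟨hodds, hk, he⟩ := hl
      rw [Nat.Partition.odds, Nat.Partition.restricted, Finset.mem_filter] at hodds ⊢
      have hp := halveP_parts l he
      have hmem : ∀ a, a ∈ (halveP l).parts → a ∈ l.parts := by
        intro a ha
        rw [hp] at ha
        rw [← halfM_add_self l he, Multiset.mem_add]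
        exact Or.inl ha
      have htf : (halveP l).parts.toFinset = l.parts.toFinset := by
        have h2 := congrArg Multiset.toFinset (halfM_add_self l he)
        rw [Multiset.toFinset_add, Finset.union_self] at h2
        rw [hp]
        exact h2
      exact ⟨⟨Finset.mem_univ _, fun i hi => hodds.2 i (hmem i hi)⟩,
        by show (halveP l).parts.toFinset.card = k; rw [htf]; exact hk⟩
    · -- left inverse
      intro ρ _
      apply Nat.Partition.ext
      have he : ∀ a ∈ (doubleP ρ).parts.toFinset, Even ((doubleP ρ).parts.count a) := by
        intro a _
        show Even ((ρ.parts + ρ.parts).count a)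
        rw [Multiset.count_add]; exact ⟨_, rfl⟩
      rw [halveP_parts _ he]
      show halfM (ρ.parts + ρ.parts) = ρ.parts
      exact halfM_double ρ.parts
    · -- right inverse
      intro l hl
      rw [Finset.mem_filter] at hl
      apply Nat.Partition.ext
      show (halveP l).parts + (halveP l).parts = l.parts
      rw [halveP_parts l hl.2.2]
      exact halfM_add_self l hl.2.2
    · -- weights
      intro ρ hρ
      rw [Finset.mem_filter] at hρ
      have htf : (doubleP ρ).parts.toFinset = ρ.parts.toFinset := by
        show (ρ.parts + ρ.parts).toFinset = _
        rw [Multiset.toFinset_add, Finset.union_self]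
      show 2 ^ k * pdoWeight ρ = pdoWeight (doubleP ρ)
      unfold pdoWeight
      rw [htf]
      have : ∀ a ∈ ρ.parts.toFinset, (doubleP ρ).parts.count a = 2 * ρ.parts.count a := by
        intro a _
        show (ρ.parts + ρ.parts).count a = _
        rw [Multiset.count_add]; omega
      rw [Finset.prod_congr rfl this, Finset.prod_mul_distrib, Finset.prod_const]
      have hcard : ρ.parts.toFinset.card = k := hρ.2
      rw [hcard]
  rw [step1]
  -- Step 2 : RHS as a sum over a sigma finset
  have step2 : (∑ i ∈ Finset.range (n + 1),
        ∑ mu ∈ Nat.Partition.odds i,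
          ∑ nu ∈ Nat.Partition.odds (n - i),
            if numDistinct mu + numDistinct nu = k ∧
                mu.parts.toFinset ∩ nu.parts.toFinset = ∅ then
              pdoWeight mu * pdoWeight nu
            else 0) =
      ∑ y ∈ (Finset.range (n + 1)).sigma
          (fun i => Nat.Partition.odds i ×ˢ Nat.Partition.odds (n - i)),
        if numDistinct y.2.1 + numDistinct y.2.2 = k ∧
            y.2.1.parts.toFinset ∩ y.2.2.parts.toFinset = ∅ then
          pdoWeight y.2.1 * pdoWeight y.2.2
        else 0 := by
    rw [Finset.sum_sigma]
    exact Finset.sum_congr rfl fun i _ => (Finset.sum_product (Nat.Partition.odds i)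
      (Nat.Partition.odds (n - i)) (fun p => if numDistinct p.1 + numDistinct p.2 = k ∧
        p.1.parts.toFinset ∩ p.2.parts.toFinset = ∅ then pdoWeight p.1 * pdoWeight p.2
      else 0)).symm
  rw [step2]
  -- Step 3 : restrict to disjoint pairs
  rw [← Finset.sum_filter_of_ne (p := fun y : PairT n =>
      y.2.1.parts.toFinset ∩ y.2.2.parts.toFinset = ∅)
      (fun y _ hy => by by_contra hp; exact hy (if_neg fun hc => hp hc.2))]
  -- Step 4 : bijection with (partition of n, subset of part sizes)
  have step4 : (∑ y ∈ ((Finset.range (n + 1)).sigma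
          (fun i => Nat.Partition.odds i ×ˢ Nat.Partition.odds (n - i))).filter
          (fun y => y.2.1.parts.toFinset ∩ y.2.2.parts.toFinset = ∅),
        if numDistinct y.2.1 + numDistinct y.2.2 = k ∧
            y.2.1.parts.toFinset ∩ y.2.2.parts.toFinset = ∅ then
          pdoWeight y.2.1 * pdoWeight y.2.2
        else 0) =
      ∑ x ∈ (Nat.Partition.odds n).sigma (fun ρ => ρ.parts.toFinset.powerset),
        if numDistinct x.1 = k then pdoWeight x.1 else 0 := by
    refine Finset.sum_nbij' joinP splitP ?_ ?_ ?_ ?_ ?_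
    · -- joinP lands in the rho-sigma set
      rintro ⟨i, mu, nu⟩ hy
      rw [Finset.mem_filter, Finset.mem_sigma, Finset.mem_range, Finset.mem_product] at hy
      obtain ⟨⟨hi, hmu, hnu⟩, _⟩ := hy
      have hi' : i < n + 1 := hi
      have hin : i ≤ n := by omega
      rw [joinP, dif_pos hin, Finset.mem_sigma]
      constructor
      · rw [Nat.Partition.odds, Nat.Partition.restricted, Finset.mem_filter]
        rw [Nat.Partition.odds, Nat.Partition.restricted, Finset.mem_filter] at hmu hnu
        exact ⟨Finset.mem_univ _,
          fun a ha => (Multiset.mem_add.1 ha).elim (hmu.2 a) (hnu.2 a)⟩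
      · rw [Finset.mem_powerset]
        show mu.parts.toFinset ⊆ (mu.parts + nu.parts).toFinset
        rw [Multiset.toFinset_add]
        exact Finset.subset_union_left
    · -- splitP lands in the filtered pair-sigma set
      rintro ⟨ρ, S⟩ hx
      rw [Finset.mem_sigma, Finset.mem_powerset] at hx
      obtain ⟨hρ, hS⟩ := hx
      rw [Nat.Partition.odds, Nat.Partition.restricted, Finset.mem_filter] at hρ
      have hsum := Multiset.sum_filter_add_sum_filter_not (s := ρ.parts) (· ∈ S)
      rw [ρ.parts_sum] at hsum
      rw [Finset.mem_filter, Finset.mem_sigma, Finset.mem_range, Finset.mem_product]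
      refine ⟨⟨show (ρ.parts.filter (· ∈ S)).sum < n + 1 by omega, ?_, ?_⟩, ?_⟩
      · rw [Nat.Partition.odds, Nat.Partition.restricted, Finset.mem_filter]
        exact ⟨Finset.mem_univ _, fun a ha => hρ.2 a (Multiset.mem_of_mem_filter ha)⟩
      · rw [Nat.Partition.odds, Nat.Partition.restricted, Finset.mem_filter]
        exact ⟨Finset.mem_univ _, fun a ha => hρ.2 a (Multiset.mem_of_mem_filter ha)⟩
      · show (ρ.parts.filter (· ∈ S)).toFinset ∩ (ρ.parts.filter (· ∉ S)).toFinset = ∅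
        rw [Finset.eq_empty_iff_forall_notMem]
        intro a ha
        rw [Finset.mem_inter, Multiset.mem_toFinset, Multiset.mem_toFinset,
          Multiset.mem_filter, Multiset.mem_filter] at ha
        exact ha.2.2 ha.1.2
    · -- left inverse : splitP ∘ joinP = id on the filtered set
      rintro ⟨i, mu, nu⟩ hy
      rw [Finset.mem_filter, Finset.mem_sigma, Finset.mem_range, Finset.mem_product] at hy
      obtain ⟨⟨hi, _, _⟩, hdisj⟩ := hy
      have hi' : i < n + 1 := hi
      have hin : i ≤ n := by omega
      rw [joinP, dif_pos hin]
      have hnotin : ∀ a ∈ nu.parts, a ∉ mu.parts.toFinset := by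
        intro a ha hmem
        have : a ∈ mu.parts.toFinset ∩ nu.parts.toFinset :=
          Finset.mem_inter.2 ⟨hmem, Multiset.mem_toFinset.2 ha⟩
        rw [hdisj] at this
        exact absurd this (Finset.notMem_empty a)
      have hf1 : (mu.parts + nu.parts).filter (· ∈ mu.parts.toFinset) = mu.parts := by
        rw [Multiset.filter_add,
          Multiset.filter_eq_self.2 (fun a ha => Multiset.mem_toFinset.2 ha),
          Multiset.filter_eq_nil.2 hnotin, add_zero]
      have hf2 : (mu.parts + nu.parts).filter (· ∉ mu.parts.toFinset) = nu.parts := by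
        rw [Multiset.filter_add,
          Multiset.filter_eq_nil.2 (fun a ha h => h (Multiset.mem_toFinset.2 ha)),
          Multiset.filter_eq_self.2 hnotin, zero_add]
      refine pair_ext ?_ ?_ ?_
      · show ((mu.parts + nu.parts).filter (· ∈ mu.parts.toFinset)).sum = i
        rw [hf1, mu.parts_sum]
      · exact hf1
      · exact hf2
    · -- right inverse : joinP ∘ splitP = id
      rintro ⟨ρ, S⟩ hx
      rw [Finset.mem_sigma, Finset.mem_powerset] at hx
      obtain ⟨_, hS⟩ := hx
      have hsum := Multiset.sum_filter_add_sum_filter_not (s := ρ.parts) (· ∈ S)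
      rw [ρ.parts_sum] at hsum
      have hin : (splitP (⟨ρ, S⟩ : RhoT n)).1 ≤ n :=
        show (ρ.parts.filter (· ∈ S)).sum ≤ n by omega
      rw [joinP, dif_pos hin]
      refine rho_ext ?_ ?_
      · show ρ.parts.filter (· ∈ S) + ρ.parts.filter (· ∉ S) = ρ.parts
        exact Multiset.filter_add_not _ _
      · show (ρ.parts.filter (· ∈ S)).toFinset = S
        rw [Multiset.toFinset_filter]
        ext a
        simp only [Finset.mem_filter, Multiset.mem_toFinset]
        exact ⟨fun h => h.2, fun h => ⟨Multiset.mem_toFinset.1 (hS h), h⟩⟩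
    · -- values agree
      rintro ⟨i, mu, nu⟩ hy
      rw [Finset.mem_filter, Finset.mem_sigma, Finset.mem_range, Finset.mem_product] at hy
      obtain ⟨⟨hi, _, _⟩, hdisj⟩ := hy
      have hi' : i < n + 1 := hi
      have hin : i ≤ n := by omega
      rw [joinP, dif_pos hin]
      have hdisj' : Disjoint mu.parts.toFinset nu.parts.toFinset :=
        Finset.disjoint_iff_inter_eq_empty.2 hdisj
      have htf : (mu.parts + nu.parts).toFinset = mu.parts.toFinset ∪ nu.parts.toFinset :=
        Multiset.toFinset_add _ _
      have hnd : numDistinct mu + numDistinct nu =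
          (mu.parts + nu.parts).toFinset.card := by
        rw [htf, Finset.card_union_of_disjoint hdisj']
        rfl
      have hpw : pdoWeight mu * pdoWeight nu =
          ∏ a ∈ (mu.parts + nu.parts).toFinset, (mu.parts + nu.parts).count a := by
        rw [htf, Finset.prod_union hdisj']
        unfold pdoWeight
        congr 1
        · refine Finset.prod_congr rfl fun a ha => ?_
          rw [Multiset.count_add,
            Multiset.count_eq_zero_of_notMem
              (fun hm => Finset.notMem_empty a
                (hdisj ▸ Finset.mem_inter.2 ⟨ha, Multiset.mem_toFinset.2 hm⟩)),
            add_zero]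
        · refine Finset.prod_congr rfl fun a ha => ?_
          rw [Multiset.count_add,
            Multiset.count_eq_zero_of_notMem
              (fun hm => Finset.notMem_empty a
                (hdisj ▸ Finset.mem_inter.2 ⟨Multiset.mem_toFinset.2 hm, ha⟩)),
            zero_add]
      simp only [hdisj, and_true]
      show (if numDistinct mu + numDistinct nu = k then pdoWeight mu * pdoWeight nu else 0) =
        _
      rw [hnd, hpw]
      rfl
  have step5 : (∑ x ∈ (Nat.Partition.odds n).sigma (fun ρ => ρ.parts.toFinset.powerset),
        if numDistinct x.1 = k then pdoWeight x.1 else 0) =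
      ∑ ρ ∈ Nat.Partition.odds n, ∑ _S ∈ ρ.parts.toFinset.powerset,
        (if numDistinct ρ = k then pdoWeight ρ else 0) :=
    Finset.sum_sigma _ _ _
  rw [step4, step5, Finset.sum_filter]
  refine Finset.sum_congr rfl fun ρ _ => ?_
  rw [Finset.sum_const, Finset.card_powerset, smul_eq_mul]
  by_cases h : numDistinct ρ = k
  · rw [if_pos h, if_pos h]
    show 2 ^ k * pdoWeight ρ = 2 ^ ρ.parts.toFinset.card * pdoWeight ρ
    rw [show ρ.parts.toFinset.card = k from h]
  · rw [if_neg h, if_neg h, mul_zero]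
end
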